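/- Let (M_t)_{t≥0} be a martingale with M_0 = 0 whose one-step increments are bounded by J, and suppose that for |θ| ≤ α the process Z_t(θ) = exp(θ M_t − Σ_{s<t} φ_s(θ)) is a supermartingale, where each φ_s(θ) ≤ (θ²/2) e^{αJ} R/τ whenever the quadratic-variation proxy Φ_{t−1} ≤ R. Then for any δ with δ ≤ e^{αJ} α R, the probability that |M_t| exceeds δ before time τ and before Φ exceeds R is at most 2·exp(−δ²/(2R e^{αJ})). -/

import Mathlib

open MeasureTheory

lemma super_maximal {Ω : Type*} {m0 : MeasurableSpace Ω} {μ : Measure Ω} [IsProbabilityMeasure μ]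
    {ℱ : Filtration ℕ m0} {Z : ℕ → Ω → ℝ} (hZ : Supermartingale Z ℱ μ)
    (hnonneg : ∀ t ω, 0 ≤ Z t ω) (hZ0 : ∀ ω, Z 0 ω = 1) {c : ℝ} (hc : 0 < c) (n : ℕ) :
    μ {ω | ∃ k, k ≤ n ∧ c ≤ Z k ω} ≤ ENNReal.ofReal (1 / c) := by
  set T : Ω → WithTop ℕ := fun ω => ((hittingBtwn Z (Set.Ici c) 0 n ω : ℕ) : WithTop ℕ) with hT_def
  have hT : IsStoppingTime ℱ T := hZ.stronglyAdapted.adapted.isStoppingTime_hittingBtwn measurableSet_Ici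
  have hTle : ∀ ω, T ω ≤ n := fun ω => WithTop.coe_le_coe.mpr (hittingBtwn_le ω)
  -- optional stopping
  have hos : ∫ ω, stoppedValue Z T ω ∂μ ≤ ∫ ω, stoppedValue Z (fun _ => 0) ω ∂μ := by
    have := (hZ.neg).expected_stoppedValue_mono (isStoppingTime_const ℱ 0) hT
      (fun ω => zero_le) hTle
    have key : ∀ (σ : Ω → WithTop ℕ), ∫ x, stoppedValue (-Z) σ x ∂μ = -∫ ω, stoppedValue Z σ ω ∂μ := by
      intro σ
      rw [← integral_neg]
      rfl
    rw [key, key, neg_le_neg_iff] at this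
    exact this
  have h0 : ∫ ω, stoppedValue Z (fun _ => 0) ω ∂μ = 1 := by
    have : stoppedValue Z (fun _ => 0) = fun ω => (1 : ℝ) := by
      funext ω; simp [stoppedValue, hZ0]
    rw [this, integral_const]; simp
  set A := {ω | ∃ k, k ≤ n ∧ c ≤ Z k ω} with hA_def
  have hAmeas : MeasurableSet A := by
    have : A = ⋃ k ∈ Finset.range (n+1), {ω | c ≤ Z k ω} := by
      ext ω
      simp only [hA_def, Set.mem_setOf_eq, Set.mem_iUnion, Finset.mem_range, Nat.lt_succ_iff,
        exists_prop]
    rw [this]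
    refine MeasurableSet.biUnion (Finset.range (n+1)).countable_toSet fun k _ => ?_
    exact measurableSet_le measurable_const
      ((hZ.stronglyMeasurable k).measurable.mono (ℱ.le k) le_rfl)
  have hint : Integrable (stoppedValue Z T) μ := by
    have := ((hZ.neg).integrable_stoppedValue hT hTle).neg
    have heq : stoppedValue Z T = -(stoppedValue (-Z) T) := by
      funext ω; simp [stoppedValue]
    rw [heq]; exact this
  have hge : ∀ ω ∈ A, c ≤ stoppedValue Z T ω := by
    intro ω hω
    obtain ⟨k, hk, hck⟩ := hω
    have : stoppedValue Z T ω ∈ Set.Ici c := stoppedValue_hittingBtwn_mem ⟨k, ⟨Nat.zero_le _, hk⟩, hck⟩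
    exact this
  have h1 : c * (μ A).toReal ≤ ∫ ω in A, stoppedValue Z T ω ∂μ :=
    setIntegral_ge_of_const_le_real hAmeas (measure_ne_top _ _) hge hint.integrableOn
  have h2 : ∫ ω in A, stoppedValue Z T ω ∂μ ≤ ∫ ω, stoppedValue Z T ω ∂μ :=
    setIntegral_le_integral hint (Filter.Eventually.of_forall fun ω => hnonneg _ _)
  have h3 : c * (μ A).toReal ≤ 1 := by
    calc c * (μ A).toReal ≤ _ := h1
    _ ≤ _ := h2
    _ ≤ 1 := by rw [← h0]; exact hos
  have h4 : (μ A).toReal ≤ 1 / c := by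
    rw [le_div_iff₀ hc]; linarith [h3]
  calc μ A = ENNReal.ofReal ((μ A).toReal) := (ENNReal.ofReal_toReal (measure_ne_top _ _)).symm
  _ ≤ ENNReal.ofReal (1 / c) := ENNReal.ofReal_le_ofReal h4


/-- The key deviation bound: if `M` is a martingale with `M 0 = 0`, increments bounded by `J`,
and for each `|θ| ≤ α` the process `Z_t(θ) = exp(θ M_t − ∑_{s<t} φ_s(θ))` is a supermartingale,
where `φ_s(θ) ≤ (θ²/2) e^{αJ} R/τ` whenever the quadratic-variation proxy `Φ_s ≤ R`, then
for `δ ≤ e^{αJ} α R`, the probability that `|M_t|` exceeds `δ` at some time `t ≤ τ` before `Φ`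
exceeds `R` is at most `2 exp(−δ²/(2 R e^{αJ}))`. -/
theorem stmt3 {Ω : Type*} {m0 : MeasurableSpace Ω} {μ : Measure Ω} [IsProbabilityMeasure μ]
    (ℱ : Filtration ℕ m0) (M : ℕ → Ω → ℝ) (Φ : ℕ → Ω → ℝ) (φ : ℕ → ℝ → Ω → ℝ)
    (J R α δ : ℝ) (τ : ℕ)
    (hJ : 0 < J) (hR : 0 < R) (hα : 0 < α) (hδ : 0 < δ) (hτ : 0 < τ)
    (hM : Martingale M ℱ μ)
    (hM0 : ∀ ω, M 0 ω = 0)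
    (hincr : ∀ t ω, |M (t + 1) ω - M t ω| ≤ J)
    (hsup : ∀ θ : ℝ, |θ| ≤ α →
      Supermartingale
        (fun t ω => Real.exp (θ * M t ω - ∑ s ∈ Finset.range t, φ s θ ω)) ℱ μ)
    (hφ : ∀ θ : ℝ, |θ| ≤ α → ∀ s ω, Φ s ω ≤ R →
      φ s θ ω ≤ θ ^ 2 / 2 * Real.exp (α * J) * R / τ)
    (hδα : δ ≤ Real.exp (α * J) * α * R) :
    μ {ω | ∃ t, t ≤ τ ∧ (∀ s < t, Φ s ω ≤ R) ∧ δ < |M t ω|}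
      ≤ ENNReal.ofReal (2 * Real.exp (-δ ^ 2 / (2 * R * Real.exp (α * J)))) := by
  set K := Real.exp (α * J) with hK_def
  have hK : 0 < K := Real.exp_pos _
  have hKR : 0 < K * R := mul_pos hK hR
  set θ := δ / (K * R) with hθ_def
  have hθ : 0 < θ := div_pos hδ hKR
  have hθα : |θ| ≤ α := by
    rw [abs_of_pos hθ, hθ_def, div_le_iff₀ hKR]
    calc δ ≤ K * α * R := hδα
    _ = α * (K * R) := by ring
  have hθα' : |(-θ)| ≤ α := by rwa [abs_neg]
  set c := Real.exp (δ ^ 2 / (2 * R * K)) with hc_def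
  have hc : 0 < c := Real.exp_pos _
  have hτR : (0:ℝ) < (τ:ℝ) := by exact_mod_cast hτ
  have hsum : ∀ (θ' : ℝ), |θ'| ≤ α → ∀ t ω, t ≤ τ → (∀ s < t, Φ s ω ≤ R) →
      ∑ s ∈ Finset.range t, φ s θ' ω ≤ θ' ^ 2 / 2 * K * R := by
    intro θ' hθ' t ω ht hΦle
    have hb : (0:ℝ) ≤ θ' ^ 2 / 2 * K * R / τ := by positivity
    calc ∑ s ∈ Finset.range t, φ s θ' ω
        ≤ ∑ s ∈ Finset.range t, θ' ^ 2 / 2 * K * R / τ :=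
          Finset.sum_le_sum fun s hs => hφ θ' hθ' s ω (hΦle s (Finset.mem_range.mp hs))
      _ = (t : ℝ) * (θ' ^ 2 / 2 * K * R / τ) := by
          simp [Finset.sum_const, Finset.card_range, nsmul_eq_mul]
      _ ≤ (τ : ℝ) * (θ' ^ 2 / 2 * K * R / τ) := by
          apply mul_le_mul_of_nonneg_right _ hb
          exact_mod_cast ht
      _ = θ' ^ 2 / 2 * K * R := by field_simp
  have hθMδ : θ * δ - θ ^ 2 / 2 * K * R = δ ^ 2 / (2 * R * K) := by
    rw [hθ_def]; field_simp; ring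
  set Zp : ℕ → Ω → ℝ := fun t ω => Real.exp (θ * M t ω - ∑ s ∈ Finset.range t, φ s θ ω)
    with hZp_def
  set Zm : ℕ → Ω → ℝ := fun t ω => Real.exp ((-θ) * M t ω - ∑ s ∈ Finset.range t, φ s (-θ) ω)
    with hZm_def
  have hsub : {ω | ∃ t, t ≤ τ ∧ (∀ s < t, Φ s ω ≤ R) ∧ δ < |M t ω|} ⊆
      {ω | ∃ k, k ≤ τ ∧ c ≤ Zp k ω} ∪ {ω | ∃ k, k ≤ τ ∧ c ≤ Zm k ω} := by
    rintro ω ⟨t, ht, hΦle, habs⟩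
    rcases lt_abs.mp habs with h | h
    · left
      refine ⟨t, ht, ?_⟩
      rw [hZp_def, hc_def]
      apply Real.exp_le_exp.mpr
      have h1 := hsum θ hθα t ω ht hΦle
      have h2 : θ * δ ≤ θ * M t ω := mul_le_mul_of_nonneg_left h.le hθ.le
      linarith [hθMδ]
    · right
      refine ⟨t, ht, ?_⟩
      rw [hZm_def, hc_def]
      apply Real.exp_le_exp.mpr
      have h1 := hsum (-θ) hθα' t ω ht hΦle
      have h2 : θ * δ ≤ (-θ) * M t ω := by nlinarith
      have h3 : (-θ) ^ 2 = θ ^ 2 := by ring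
      rw [h3] at h1
      linarith [hθMδ]
  have hZp0 : ∀ ω, Zp 0 ω = 1 := by intro ω; simp [hZp_def, hM0]
  have hZm0 : ∀ ω, Zm 0 ω = 1 := by intro ω; simp [hZm_def, hM0]
  have hp := super_maximal (hsup θ hθα) (fun t ω => (Real.exp_pos _).le) hZp0 hc τ
  have hm := super_maximal (hsup (-θ) hθα') (fun t ω => (Real.exp_pos _).le) hZm0 hc τ
  calc μ {ω | ∃ t, t ≤ τ ∧ (∀ s < t, Φ s ω ≤ R) ∧ δ < |M t ω|}
      ≤ μ ({ω | ∃ k, k ≤ τ ∧ c ≤ Zp k ω} ∪ {ω | ∃ k, k ≤ τ ∧ c ≤ Zm k ω}) :=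
        measure_mono hsub
    _ ≤ μ {ω | ∃ k, k ≤ τ ∧ c ≤ Zp k ω} + μ {ω | ∃ k, k ≤ τ ∧ c ≤ Zm k ω} :=
        measure_union_le _ _
    _ ≤ ENNReal.ofReal (1 / c) + ENNReal.ofReal (1 / c) := add_le_add hp hm
    _ = ENNReal.ofReal (2 * Real.exp (-δ ^ 2 / (2 * R * K))) := by
        rw [← ENNReal.ofReal_add (by positivity) (by positivity)]
        congr 1
        rw [hc_def, neg_div, Real.exp_neg]
        ring
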